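/- arXiv:2604.06060 — 2 statements merged into one kernel-verified Lean document; each statement's English description precedes it below -/
import Mathlib

section
/- Let Σ : ℕ → Matrix n n ℝ satisfy the recursion Σ_{t+1} = (1 − p·θ_{t+1})·(A Σ_t Aᵀ + W) for t ≥ k, with initial condition Σ_k = (1 − p·θ_k)·E, where each θ_s ∈ {0,1} and 0 ≤ p ≤ 1. Then for all t ≥ k, Σ_t = ∑_{τ=k}^{t} (1−p)^{c_{t,τ}} · G_{t,τ}, where c_{t,τ} := ∑_{s=τ}^{t} θ_s, G_{t,k} := A^{t−k} E (A^{t−k})ᵀ, and G_{t,τ} := A^{t−τ} W (A^{t−τ})ᵀ for τ ≥ k+1. -/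
open Matrix Finset

/-- Closed-form solution of the erasure-channel covariance recursion:
`Σ_{t+1} = (1 − p θ_{t+1})(A Σ_t Aᵀ + W)` with `Σ_k = (1 − p θ_k) E` implies
`Σ_t = ∑_{τ=k}^{t} (1−p)^{∑_{s=τ}^{t} θ_s} G_{t,τ}`. -/
theorem closed_form_covariance {n : ℕ}
    (A W E : Matrix (Fin n) (Fin n) ℝ) (p : ℝ) (hp0 : 0 ≤ p) (hp1 : p ≤ 1)
    (θ : ℕ → ℕ) (hθ : ∀ s, θ s ≤ 1) (k : ℕ)
    (Sig : ℕ → Matrix (Fin n) (Fin n) ℝ)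
    (hinit : Sig k = (1 - p * (θ k : ℝ)) • E)
    (hrec : ∀ t, k ≤ t →
      Sig (t + 1) = (1 - p * (θ (t + 1) : ℝ)) • (A * Sig t * Aᵀ + W)) :
    ∀ t, k ≤ t →
      Sig t = ∑ τ ∈ Finset.Icc k t,
        (1 - p) ^ (∑ s ∈ Finset.Icc τ t, θ s) •
          (if τ = k then A ^ (t - k) * E * (A ^ (t - k))ᵀ
           else A ^ (t - τ) * W * (A ^ (t - τ))ᵀ) := by
  have key : ∀ s, (1 - p * (θ s : ℝ)) = (1 - p) ^ (θ s) := by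
    intro s
    have h := hθ s
    interval_cases h : θ s <;> simp
  intro t ht
  induction t, ht using Nat.le_induction with
  | base =>
      rw [hinit, Finset.Icc_self, Finset.sum_singleton, key]
      simp
  | succ t ht IH =>
      rw [hrec t ht, IH, key, Finset.sum_Icc_succ_top (by omega : k ≤ t + 1)]
      have hne : t + 1 ≠ k := by omega
      rw [if_neg hne]
      rw [Matrix.mul_sum, Finset.sum_mul, smul_add, Finset.smul_sum]
      congr 1
      · apply Finset.sum_congr rfl
        intro τ hτ
        simp only [Finset.mem_Icc] at hτ
        rw [Finset.sum_Icc_succ_top (by omega : τ ≤ t + 1)]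
        rw [Matrix.mul_smul, Matrix.smul_mul, smul_smul, pow_add]
        have h1 : t + 1 - τ = (t - τ) + 1 := by omega
        have h2 : t + 1 - k = (t - k) + 1 := by omega
        congr 1
        · ring
        · split_ifs with h
          · simp [h2, pow_succ', Matrix.transpose_mul, Matrix.mul_assoc]
          · simp [h1, pow_succ', Matrix.transpose_mul, Matrix.mul_assoc]
      · rw [Finset.Icc_self, Finset.sum_singleton]
        simp
end

section
/- Ratio upper bound relative to the lossless optimum: with J_p and J_1 as in the schedule-cost definitions, let J_p⋆ := min_Θ J_p(Θ) and J_1⋆ := min_Θ J_1(Θ) over all binary schedules Θ ∈ {0,1}^{T−k}, and let Θ₁⋆ be any minimizer of J_1. If J_1⋆ > 0 then J_p⋆ / J_1⋆ ≤ 1 + (1−p)·(∑_{t=k}^{T−1}∑_{τ=k}^{t} 1{c_{t,τ}(Θ₁⋆) ≥ 1}·g_{t,τ}) / J_1⋆. -/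
open Finset

def intervalCount (θ : ℕ → ℕ) (τ t : ℕ) : ℕ := ∑ s ∈ Finset.Icc τ t, θ s

noncomputable def Jp (k T : ℕ) (lam p : ℝ) (g : ℕ → ℕ → ℝ) (θ : ℕ → ℕ) : ℝ :=
  lam * ∑ t ∈ Finset.Ico k T, (θ t : ℝ)
    + ∑ t ∈ Finset.Ico k T, ∑ τ ∈ Finset.Icc k t,
        (1 - p) ^ (intervalCount θ τ t) * g t τ

noncomputable def J1 (k T : ℕ) (lam : ℝ) (g : ℕ → ℕ → ℝ) (θ : ℕ → ℕ) : ℝ :=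
  lam * ∑ t ∈ Finset.Ico k T, (θ t : ℝ)
    + ∑ t ∈ Finset.Ico k T, ∑ τ ∈ Finset.Icc k t,
        (if intervalCount θ τ t = 0 then g t τ else 0)

/-- Ratio upper bound of the optimal lossy cost relative to the lossless
optimum: `J_p⋆ / J_1⋆ ≤ 1 + (1−p) (∑ 1{c_{t,τ}(Θ₁⋆) ≥ 1} g_{t,τ}) / J_1⋆`. -/
theorem ratio_upper_bound (k T : ℕ) (hkT : k < T) (lam : ℝ) (hlam : 0 ≤ lam)
    (p : ℝ) (hp0 : 0 ≤ p) (hp1 : p ≤ 1)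
    (g : ℕ → ℕ → ℝ) (hg : ∀ t τ, k ≤ τ → τ ≤ t → t ≤ T - 1 → 0 ≤ g t τ)
    (θ1 θp : ℕ → ℕ) (hθ1 : ∀ s, θ1 s ≤ 1) (hθp : ∀ s, θp s ≤ 1)
    (hmin1 : ∀ θ : ℕ → ℕ, (∀ s, θ s ≤ 1) → J1 k T lam g θ1 ≤ J1 k T lam g θ)
    (hminp : ∀ θ : ℕ → ℕ, (∀ s, θ s ≤ 1) → Jp k T lam p g θp ≤ Jp k T lam p g θ)
    (hJ1pos : 0 < J1 k T lam g θ1) :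
    Jp k T lam p g θp / J1 k T lam g θ1
      ≤ 1 + (1 - p) *
          (∑ t ∈ Finset.Ico k T, ∑ τ ∈ Finset.Icc k t,
              (if 1 ≤ intervalCount θ1 τ t then g t τ else 0))
            / J1 k T lam g θ1 := by
  rw [div_le_iff₀ hJ1pos, add_mul, one_mul, div_mul_cancel₀ _ hJ1pos.ne']
  have key : Jp k T lam p g θp ≤ J1 k T lam g θ1 + (1 - p) *
      (∑ t ∈ Finset.Ico k T, ∑ τ ∈ Finset.Icc k t,
        (if 1 ≤ intervalCount θ1 τ t then g t τ else 0)) := by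
    refine le_trans (hminp θ1 hθ1) ?_
    unfold Jp J1
    rw [add_assoc]
    gcongr lam * _ + ?_
    rw [Finset.mul_sum, ← Finset.sum_add_distrib]
    refine Finset.sum_le_sum fun t ht => ?_
    rw [Finset.mul_sum, ← Finset.sum_add_distrib]
    refine Finset.sum_le_sum fun τ hτ => ?_
    simp only [Finset.mem_Ico, Finset.mem_Icc] at ht hτ
    have hgn : 0 ≤ g t τ := hg t τ hτ.1 hτ.2 (Nat.le_sub_one_of_lt ht.2)
    rcases Nat.eq_zero_or_pos (intervalCount θ1 τ t) with h0 | h1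
    · simp [h0]
    · have hc : ¬ intervalCount θ1 τ t = 0 := h1.ne'
      simp only [hc, if_false, if_pos (Nat.one_le_iff_ne_zero.mpr hc), zero_add]
      calc (1 - p) ^ intervalCount θ1 τ t * g t τ
          ≤ (1 - p) ^ 1 * g t τ :=
            mul_le_mul_of_nonneg_right
              (pow_le_pow_of_le_one (by linarith) (by linarith) h1) hgn
        _ = (1 - p) * g t τ := by ring
  linarith
end
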